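/- arXiv:1403.7961 — 3 statements merged into one kernel-verified Lean document; each statement's English description precedes it below -/
import Mathlib

section
/- Assume the discrete isoperimetric inequality |Δ|^{(d-1)/d} ≤ |∂Δ|/(2d) holds for all finite Δ ⊂ ℤ^d, d ≥ 2. Let h(x) = h*/max(|x|,1)^α with α > 1, h* > 0, J > 0. Then there exists C > 0 (depending on h*, α, d, J) such that for every finite Δ ⊂ ℤ^d with |Δ| > C, one has J·|∂Δ| > 2·Σ_{x∈Δ} h(x). -/
open Finset

/-- ℓ¹ norm of a lattice point in ℤ^d. -/
def l1 {d : ℕ} (x : Fin d → ℤ) : ℕ := ∑ i, (x i).natAbs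

/-- The magnetic field `h(x) = h*/max(|x|,1)^α`. -/
noncomputable def hfield (d : ℕ) (hstar α : ℝ) (x : Fin d → ℤ) : ℝ :=
  hstar / ((max (l1 x) 1 : ℕ) : ℝ) ^ α

/-- Edge boundary size: the number of nearest-neighbor pairs `(x,y)` with `x ∈ Δ`, `y ∉ Δ`. -/
def bdry {d : ℕ} (Δ : Finset (Fin d → ℤ)) : ℕ :=
  ∑ x ∈ Δ, (((Finset.univ : Finset (Fin d)) ×ˢ ({-1, 1} : Finset ℤ)).filter
    (fun p => x + Pi.single p.1 p.2 ∉ Δ)).card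

lemma card_le_ball {d : ℕ} (S : Finset (Fin d → ℤ)) (m : ℕ)
    (h : ∀ x ∈ S, l1 x ≤ m) : S.card ≤ (2*m+1)^d := by
  classical
  have hsub : S ⊆ Fintype.piFinset (fun _ : Fin d => Finset.Icc (-(m:ℤ)) m) := by
    intro x hx
    rw [Fintype.mem_piFinset]
    intro i
    have h1 : (x i).natAbs ≤ m := le_trans
      (Finset.single_le_sum (f := fun j => (x j).natAbs) (fun j _ => Nat.zero_le _) (mem_univ i))
      (h x hx)
    have h2 : |x i| ≤ (m : ℤ) := by
      rw [Int.abs_eq_natAbs]; exact_mod_cast h1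
    rw [Finset.mem_Icc]
    exact ⟨by linarith [(abs_le.mp h2).1], (abs_le.mp h2).2⟩
  calc S.card ≤ (Fintype.piFinset (fun _ : Fin d => Finset.Icc (-(m:ℤ)) m)).card :=
        Finset.card_le_card hsub
    _ = (2*m+1)^d := by
        rw [Fintype.card_piFinset]
        simp only [Int.card_Icc]
        rw [Finset.prod_const, Finset.card_univ, Fintype.card_fin]
        congr 1
        omega

lemma geom_tail (s : ℝ) (hs0 : 0 < s) (hs12 : s ≤ 1/2) (K M : ℕ) (hKM : K ≤ M) :
    ∑ k ∈ Finset.Ico K M, s^k ≤ 2 * s^K := by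
  rw [geom_sum_Ico (by linarith : s ≠ 1) hKM]
  rw [div_le_iff_of_neg (by linarith : s - 1 < 0)]
  nlinarith [pow_nonneg hs0.le M, mul_nonneg (pow_nonneg hs0.le K) (by linarith : (0:ℝ) ≤ 1/2 - s)]

lemma two_rpow_pow (a : ℝ) (k : ℕ) : ((2:ℝ)^a)^k = (2:ℝ)^(a * k) := by
  rw [← Real.rpow_natCast ((2:ℝ)^a) k, ← Real.rpow_mul (by norm_num : (0:ℝ) ≤ 2)]

lemma sum_bound {d : ℕ} (hd : 2 ≤ d) (hstar β : ℝ) (hh : 0 < hstar)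
    (hβ1 : 1 < β) (hβ2 : β ≤ 3/2) (Δ : Finset (Fin d → ℤ)) (hΔ : 1 ≤ Δ.card) :
    ∑ x ∈ Δ, hstar / ((max (l1 x) 1 : ℕ) : ℝ) ^ β ≤
      hstar * (3 * 2^(4*d) + 2) * (Δ.card : ℝ) ^ (((d:ℝ) - β)/d) := by
  classical
  set n := Δ.card with hn
  have hd0 : 0 < d := by omega
  have hdR : (0:ℝ) < d := by exact_mod_cast hd0
  have hdR2 : (2:ℝ) ≤ d := by exact_mod_cast hd
  have hβd : β < d := by linarith
  have hn1 : (1:ℝ) ≤ n := by exact_mod_cast hΔ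
  have hn0 : (0:ℝ) < n := by linarith
  set K := Nat.log 2 n / d + 1 with hK
  set p := 2^K with hp
  -- nat facts
  have hnp : n < p^d := by
    have h1 : Nat.log 2 n < K * d := by
      rw [hK, Nat.add_mul, one_mul]
      have := Nat.lt_mul_div_succ (Nat.log 2 n) hd0
      rw [Nat.mul_comm, Nat.add_mul, one_mul] at this
      exact this
    calc n < 2^(Nat.log 2 n + 1) := Nat.lt_pow_succ_log_self (by norm_num) n
      _ ≤ 2^(K*d) := Nat.pow_le_pow_right (by norm_num) (by omega)
      _ = p^d := by rw [hp, ← pow_mul]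
  have hpn : p^d ≤ 2^d * n := by
    rw [hp, ← pow_mul, hK, Nat.add_mul, one_mul, pow_add, Nat.mul_comm]
    apply Nat.mul_le_mul_left
    calc 2^(Nat.log 2 n / d * d) ≤ 2^(Nat.log 2 n) :=
          Nat.pow_le_pow_right (by norm_num) (Nat.div_mul_le_self _ _)
      _ ≤ n := Nat.pow_log_le_self 2 (by omega)
  -- real versions
  set P : ℝ := (p : ℝ) with hP
  have hP1 : (1:ℝ) ≤ P := by
    rw [hP]; exact_mod_cast Nat.one_le_two_pow
  have hP0 : (0:ℝ) < P := by linarith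
  -- fibers
  set f : (Fin d → ℤ) → ℕ := fun x => Nat.log 2 (max (l1 x) 1) with hf
  set g : (Fin d → ℤ) → ℝ := fun x => hstar / ((max (l1 x) 1 : ℕ) : ℝ) ^ β with hg
  set M := K + (Δ.sup f + 1) with hM
  have hmaps : ∀ x ∈ Δ, f x ∈ range M := by
    intro x hx
    have := Finset.le_sup (f := f) hx
    rw [mem_range, hM]
    have h2 := Finset.le_sup (f := f) hx
    exact Nat.lt_of_le_of_lt h2 (Nat.lt_add_left K (Nat.lt_succ_self _))
  have hsplit : ∑ x ∈ Δ, g x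
      = ∑ k ∈ range M, ∑ x ∈ Δ.filter (fun x => f x = k), g x :=
    (Finset.sum_fiberwise_of_maps_to hmaps g).symm
  set s : ℝ := (2:ℝ) ^ (-β) with hs
  have hs0 : (0:ℝ) < s := Real.rpow_pos_of_pos (by norm_num) _
  have hs12 : s ≤ 1/2 := by
    have : s ≤ (2:ℝ) ^ (-1 : ℝ) :=
      Real.rpow_le_rpow_of_exponent_le (by norm_num) (by linarith)
    rw [Real.rpow_neg_one] at this
    linarith
  -- per-element bound on fibers
  have hterm : ∀ k : ℕ, ∀ x ∈ Δ.filter (fun x => f x = k), g x ≤ hstar * s ^ k := by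
    intro k x hx
    obtain ⟨hxΔ, hk⟩ := Finset.mem_filter.mp hx
    have hv1 : 1 ≤ max (l1 x) 1 := le_max_right _ _
    have hv : 2^k ≤ max (l1 x) 1 := by
      have h3 := Nat.pow_log_le_self 2 (x := max (l1 x) 1) (by omega)
      have hk' : Nat.log 2 (max (l1 x) 1) = k := hk
      rwa [hk'] at h3
    have hvR : ((2:ℝ))^(k:ℕ) ≤ ((max (l1 x) 1 : ℕ):ℝ) := by exact_mod_cast hv
    have hb : ((2:ℝ)^(k:ℕ))^β ≤ ((max (l1 x) 1 : ℕ):ℝ)^β :=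
      Real.rpow_le_rpow (by positivity) hvR (by linarith)
    have hpos : (0:ℝ) < ((2:ℝ)^(k:ℕ))^β := Real.rpow_pos_of_pos (by positivity) _
    have h1 : g x ≤ hstar / ((2:ℝ)^(k:ℕ))^β := by
      rw [hg]
      exact div_le_div_of_nonneg_left hh.le hpos hb
    refine h1.trans (le_of_eq ?_)
    rw [hs, ← Real.rpow_natCast (2:ℝ) k, ← Real.rpow_natCast ((2:ℝ)^(-β)) k,
      ← Real.rpow_mul (by norm_num : (0:ℝ) ≤ 2), ← Real.rpow_mul (by norm_num : (0:ℝ) ≤ 2),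
      div_eq_mul_inv, ← Real.rpow_neg (by norm_num : (0:ℝ) ≤ 2)]
    ring_nf
  -- fiber cardinality bounds
  have hcard1 : ∀ k : ℕ, (Δ.filter (fun x => f x = k)).card ≤ 2^((k+3)*d) := by
    intro k
    have h1 : (Δ.filter (fun x => f x = k)).card ≤ (2*2^(k+1)+1)^d := by
      apply card_le_ball
      intro x hx
      obtain ⟨hxΔ, hk⟩ := Finset.mem_filter.mp hx
      have hk' : Nat.log 2 (max (l1 x) 1) = k := hk
      have h2 := Nat.lt_pow_succ_log_self (b := 2) (by norm_num) (max (l1 x) 1)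
      rw [hk'] at h2
      have : l1 x ≤ max (l1 x) 1 := le_max_left _ _
      omega
    refine h1.trans ?_
    rw [pow_mul]
    apply Nat.pow_le_pow_left
    have h4 : (2:ℕ)^(k+3) = 4 * 2^(k+1) := by ring
    have h5 : 1 ≤ (2:ℕ)^(k+1) := Nat.one_le_two_pow
    omega
  have hcard2 : ∀ k : ℕ, (Δ.filter (fun x => f x = k)).card ≤ n :=
    fun k => Finset.card_filter_le Δ _
  -- fiber sum bounds
  have hfibA : ∀ k : ℕ, ∑ x ∈ Δ.filter (fun x => f x = k), g x
      ≤ ((2:ℝ)^((k+3)*d)) * (hstar * s ^ k) := by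
    intro k
    have h1 := Finset.sum_le_card_nsmul _ _ _ (hterm k)
    rw [nsmul_eq_mul] at h1
    refine h1.trans ?_
    apply mul_le_mul_of_nonneg_right _ (by positivity)
    exact_mod_cast hcard1 k
  have hfibB : ∀ k : ℕ, ∑ x ∈ Δ.filter (fun x => f x = k), g x
      ≤ (n:ℝ) * (hstar * s ^ k) := by
    intro k
    have h1 := Finset.sum_le_card_nsmul _ _ _ (hterm k)
    rw [nsmul_eq_mul] at h1
    refine h1.trans ?_
    apply mul_le_mul_of_nonneg_right _ (by positivity)
    exact_mod_cast hcard2 k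
  -- the geometric ratio for the head
  set r : ℝ := (2:ℝ) ^ ((d:ℝ) - β) with hr
  have hr2 : ((2:ℝ))^((1:ℝ)/2) ≤ r :=
    Real.rpow_le_rpow_of_exponent_le (by norm_num) (by linarith)
  have hsqrt : (4/3 : ℝ) ≤ (2:ℝ)^((1:ℝ)/2) := by
    rw [← Real.sqrt_eq_rpow]
    nlinarith [Real.sq_sqrt (by norm_num : (0:ℝ) ≤ 2), Real.sqrt_nonneg 2]
  have hr1 : (4/3:ℝ) ≤ r := le_trans hsqrt hr2
  have hhead1 : ∀ k : ℕ, ((2:ℝ)^((k+3)*d)) * (hstar * s ^ k)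
      = hstar * ((2:ℝ)^(3*d) * r^k) := by
    intro k
    rw [hs, hr, two_rpow_pow, two_rpow_pow, ← Real.rpow_natCast (2:ℝ) ((k+3)*d),
      ← Real.rpow_natCast (2:ℝ) (3*d), mul_left_comm,
      ← Real.rpow_add (by norm_num : (0:ℝ) < 2), ← Real.rpow_add (by norm_num : (0:ℝ) < 2)]
    congr 2
    push_cast
    ring
  have hgeom : ∑ k ∈ range K, r^k ≤ 3 * r^K := by
    have hrne : r ≠ 1 := by intro h; rw [h] at hr1; norm_num at hr1
    rw [geom_sum_eq hrne]
    have hrK : (1:ℝ) ≤ r^K := one_le_pow₀ (by linarith)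
    rw [div_le_iff₀ (by linarith : (0:ℝ) < r - 1)]
    nlinarith
  have e2 : P^(d:ℝ) = ((p^d : ℕ):ℝ) := by
    rw [Real.rpow_natCast, hP]; push_cast; ring
  have hrP : r^K = P^((d:ℝ)-β) := by
    rw [hr, two_rpow_pow, hP, hp, Nat.cast_pow, Nat.cast_ofNat,
      ← Real.rpow_natCast (2:ℝ) K, ← Real.rpow_mul (by norm_num : (0:ℝ) ≤ 2), mul_comm]
  set e : ℝ := ((d:ℝ) - β)/d with he
  have he0 : (0:ℝ) ≤ e := div_nonneg (by linarith) hdR.le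
  have hne : (0:ℝ) ≤ (n:ℝ)^e := Real.rpow_nonneg hn0.le e
  have hPbound : P^((d:ℝ)-β) ≤ (2:ℝ)^d * (n:ℝ)^e := by
    have e1 : P^((d:ℝ)-β) = (P^(d:ℝ))^e := by
      rw [← Real.rpow_mul hP0.le, he]
      congr 1
      field_simp
    rw [e1, e2]
    have h3 : ((p^d:ℕ):ℝ) ≤ ((2^d * n : ℕ):ℝ) := by exact_mod_cast hpn
    calc ((p^d:ℕ):ℝ)^e ≤ ((2^d*n:ℕ):ℝ)^e := Real.rpow_le_rpow (by positivity) h3 he0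
      _ = ((2:ℝ)^d)^e * (n:ℝ)^e := by
          push_cast
          rw [Real.mul_rpow (by positivity) (by positivity)]
      _ ≤ (2:ℝ)^d * (n:ℝ)^e := by
          apply mul_le_mul_of_nonneg_right _ hne
          have h5 : ((2:ℝ)^d)^e ≤ ((2:ℝ)^d)^(1:ℝ) := by
            apply Real.rpow_le_rpow_of_exponent_le (one_le_pow₀ (by norm_num))
            rw [he, div_le_one hdR]
            linarith
          rwa [Real.rpow_one] at h5
  -- head total
  have hhead : ∑ k ∈ range K, ∑ x ∈ Δ.filter (fun x => f x = k), g x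
      ≤ hstar * (3 * (2:ℝ)^(4*d)) * (n:ℝ)^e := by
    calc ∑ k ∈ range K, ∑ x ∈ Δ.filter (fun x => f x = k), g x
        ≤ ∑ k ∈ range K, hstar * ((2:ℝ)^(3*d) * r^k) :=
          Finset.sum_le_sum (fun k _ => (hfibA k).trans_eq (hhead1 k))
      _ = hstar * (2:ℝ)^(3*d) * ∑ k ∈ range K, r^k := by
          rw [Finset.mul_sum]
          exact Finset.sum_congr rfl (fun k _ => by ring)
      _ ≤ hstar * (2:ℝ)^(3*d) * (3 * r^K) := by
          apply mul_le_mul_of_nonneg_left hgeom (by positivity)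
      _ ≤ hstar * (2:ℝ)^(3*d) * (3 * ((2:ℝ)^d * (n:ℝ)^e)) := by
          apply mul_le_mul_of_nonneg_left _ (by positivity)
          rw [hrP]
          linarith [hPbound]
      _ = hstar * (3 * (2:ℝ)^(4*d)) * (n:ℝ)^e := by
          rw [show 4*d = 3*d + d by ring, pow_add]
          ring
  -- tail
  have hKM : K ≤ M := by rw [hM]; omega
  have hsP : s^K = P^(-β) := by
    rw [hs, two_rpow_pow, hP, hp, Nat.cast_pow, Nat.cast_ofNat,
      ← Real.rpow_natCast (2:ℝ) K, ← Real.rpow_mul (by norm_num : (0:ℝ) ≤ 2), mul_comm]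
  have hgeomtail : ∑ k ∈ Ico K M, s^k ≤ 2 * s^K := geom_tail s hs0 hs12 K M hKM
  have htailP : (n:ℝ) * P^(-β) ≤ (n:ℝ)^e := by
    have h1 : (n:ℝ) ≤ P^(d:ℝ) := by
      rw [e2]; exact_mod_cast hnp.le
    have h2 : (P^(d:ℝ))^(-(β/d)) ≤ (n:ℝ)^(-(β/d)) :=
      Real.rpow_le_rpow_of_nonpos hn0 h1 (by
        apply neg_nonpos_of_nonneg
        positivity)
    have h3 : (P^(d:ℝ))^(-(β/d)) = P^(-β) := by
      rw [← Real.rpow_mul hP0.le]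
      congr 1
      field_simp
    calc (n:ℝ) * P^(-β) = (n:ℝ) * (P^(d:ℝ))^(-(β/d)) := by rw [h3]
      _ ≤ (n:ℝ) * (n:ℝ)^(-(β/d)) := mul_le_mul_of_nonneg_left h2 hn0.le
      _ = (n:ℝ)^e := by
          nth_rewrite 1 [← Real.rpow_one (n:ℝ)]
          rw [← Real.rpow_add hn0]
          rw [he]
          congr 1
          field_simp
          ring
  have htail : ∑ k ∈ Ico K M, ∑ x ∈ Δ.filter (fun x => f x = k), g x
      ≤ hstar * 2 * (n:ℝ)^e := by
    calc ∑ k ∈ Ico K M, ∑ x ∈ Δ.filter (fun x => f x = k), g x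
        ≤ ∑ k ∈ Ico K M, (n:ℝ) * (hstar * s^k) :=
          Finset.sum_le_sum (fun k _ => hfibB k)
      _ = (n:ℝ) * hstar * ∑ k ∈ Ico K M, s^k := by
          rw [Finset.mul_sum]
          exact Finset.sum_congr rfl (fun k _ => by ring)
      _ ≤ (n:ℝ) * hstar * (2 * s^K) := by
          apply mul_le_mul_of_nonneg_left hgeomtail (by positivity)
      _ = hstar * 2 * ((n:ℝ) * P^(-β)) := by rw [hsP]; ring
      _ ≤ hstar * 2 * (n:ℝ)^e := by
          apply mul_le_mul_of_nonneg_left htailP (by positivity)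
  -- assemble
  have hsplit2 : ∑ k ∈ range M, ∑ x ∈ Δ.filter (fun x => f x = k), g x
      = ∑ k ∈ range K, ∑ x ∈ Δ.filter (fun x => f x = k), g x
        + ∑ k ∈ Ico K M, ∑ x ∈ Δ.filter (fun x => f x = k), g x := by
    rw [range_eq_Ico, ← Finset.sum_Ico_consecutive _ (Nat.zero_le K) hKM, ← range_eq_Ico]
  have hfinal : ∑ x ∈ Δ, g x ≤ hstar * (3 * 2^(4*d) + 2) * (n:ℝ)^e := by
    rw [hsplit, hsplit2]
    calc ∑ k ∈ range K, ∑ x ∈ Δ.filter (fun x => f x = k), g x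
          + ∑ k ∈ Ico K M, ∑ x ∈ Δ.filter (fun x => f x = k), g x
        ≤ hstar * (3 * (2:ℝ)^(4*d)) * (n:ℝ)^e + hstar * 2 * (n:ℝ)^e := add_le_add hhead htail
      _ = hstar * (3 * 2^(4*d) + 2) * (n:ℝ)^e := by ring
  exact hfinal

theorem statement6 (d : ℕ) (hd : 2 ≤ d) (hstar α J : ℝ)
    (hh : 0 < hstar) (hα : 1 < α) (hJ : 0 < J)
    (hiso : ∀ Δ : Finset (Fin d → ℤ),
      (Δ.card : ℝ) ^ (((d : ℝ) - 1) / d) ≤ (bdry Δ : ℝ) / (2 * d)) :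
    ∃ C : ℝ, 0 < C ∧ ∀ Δ : Finset (Fin d → ℤ), C < (Δ.card : ℝ) →
      2 * ∑ x ∈ Δ, hfield d hstar α x < J * (bdry Δ : ℝ) := by
  classical
  have hdR : (0:ℝ) < d := by exact_mod_cast (by omega : 0 < d)
  set β := min α (3/2 : ℝ) with hβ
  have hβ1 : 1 < β := lt_min hα (by norm_num)
  have hβ2 : β ≤ 3/2 := min_le_right _ _
  have hβα : β ≤ α := min_le_left _ _
  set A : ℝ := hstar * (3 * 2^(4*d) + 2) with hA
  have hA0 : (0:ℝ) < A := by positivity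
  have hJd : (0:ℝ) < J * d := by positivity
  set B : ℝ := (A / (J * d)) ^ ((d:ℝ)/(β - 1)) with hB
  have hB0 : (0:ℝ) < B := Real.rpow_pos_of_pos (by positivity) _
  refine ⟨max 1 B, by positivity, ?_⟩
  intro Δ hΔ
  have hn1 : (1:ℝ) < Δ.card := lt_of_le_of_lt (le_max_left _ _) hΔ
  have hncard : 1 ≤ Δ.card := by exact_mod_cast hn1.le
  have hn0 : (0:ℝ) < Δ.card := by linarith
  have hmono : ∀ x ∈ Δ, hfield d hstar α x ≤ hstar / ((max (l1 x) 1 : ℕ):ℝ)^β := by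
    intro x _
    unfold hfield
    have hv1 : (1:ℝ) ≤ ((max (l1 x) 1 : ℕ):ℝ) := by exact_mod_cast le_max_right (l1 x) 1
    have hb : ((max (l1 x) 1:ℕ):ℝ)^β ≤ ((max (l1 x) 1:ℕ):ℝ)^α :=
      Real.rpow_le_rpow_of_exponent_le hv1 hβα
    exact div_le_div_of_nonneg_left hh.le (Real.rpow_pos_of_pos (by linarith) β) hb
  have hsum : ∑ x ∈ Δ, hfield d hstar α x ≤ A * (Δ.card:ℝ)^(((d:ℝ)-β)/d) :=
    le_trans (Finset.sum_le_sum hmono) (sum_bound hd hstar β hh hβ1 hβ2 Δ hncard)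
  have hlt : A < J * d * (Δ.card:ℝ)^((β-1)/d) := by
    have h1 : B < (Δ.card:ℝ) := lt_of_le_of_lt (le_max_right _ _) hΔ
    have h2 : B^((β-1)/(d:ℝ)) < (Δ.card:ℝ)^((β-1)/d) :=
      Real.rpow_lt_rpow hB0.le h1 (by
        apply div_pos (by linarith) hdR)
    have h3 : B^((β-1)/(d:ℝ)) = A/(J*d) := by
      rw [hB, ← Real.rpow_mul (by positivity)]
      rw [show (d:ℝ)/(β-1) * ((β-1)/(d:ℝ)) = 1 by
        have h4 : (β-1) ≠ 0 := ne_of_gt (by linarith)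
        have h5 : (d:ℝ) ≠ 0 := ne_of_gt hdR
        field_simp]
      exact Real.rpow_one _
    rw [h3] at h2
    calc A = (A/(J*d)) * (J*d) := by field_simp
      _ < (Δ.card:ℝ)^((β-1)/d) * (J*d) := mul_lt_mul_of_pos_right h2 hJd
      _ = J * d * (Δ.card:ℝ)^((β-1)/d) := by ring
  have hkey : A * (Δ.card:ℝ)^(((d:ℝ)-β)/d) < J * d * (Δ.card:ℝ)^(((d:ℝ)-1)/d) := by
    have hpose : (0:ℝ) < (Δ.card:ℝ)^(((d:ℝ)-β)/d) := Real.rpow_pos_of_pos hn0 _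
    calc A * (Δ.card:ℝ)^(((d:ℝ)-β)/d)
        < (J * d * (Δ.card:ℝ)^((β-1)/d)) * (Δ.card:ℝ)^(((d:ℝ)-β)/d) :=
          mul_lt_mul_of_pos_right hlt hpose
      _ = J * d * (Δ.card:ℝ)^(((d:ℝ)-1)/d) := by
          rw [mul_assoc, ← Real.rpow_add hn0]
          rw [← add_div]
          congr 2
          ring
  have hbd : J * d * 2 * (Δ.card:ℝ)^(((d:ℝ)-1)/d) ≤ J * (bdry Δ : ℝ) := by
    have h1 := hiso Δ
    rw [le_div_iff₀ (by positivity)] at h1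
    calc J * d * 2 * (Δ.card:ℝ)^(((d:ℝ)-1)/d)
        = J * ((Δ.card:ℝ)^(((d:ℝ)-1)/d) * (2*d)) := by ring
      _ ≤ J * (bdry Δ : ℝ) := mul_le_mul_of_nonneg_left h1 hJ.le
  have hkey2 : (0:ℝ) < (Δ.card:ℝ)^(((d:ℝ)-1)/d) := Real.rpow_pos_of_pos hn0 _
  calc 2 * ∑ x ∈ Δ, hfield d hstar α x ≤ 2 * (A * (Δ.card:ℝ)^(((d:ℝ)-β)/d)) := by linarith
    _ < 2 * (J * d * (Δ.card:ℝ)^(((d:ℝ)-1)/d)) := by linarith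
    _ ≤ J * (bdry Δ : ℝ) := by linarith
end

section
/- Assume the discrete isoperimetric inequality |Δ|^{(d-1)/d} ≤ |∂Δ|/(2d) for all finite Δ ⊂ ℤ^d, d ≥ 2, and let h(x) = h*/max(|x|,1)^α with α > 1, h*, J > 0. Define ĥ(x) = 0 for |x| ≤ R and ĥ(x) = h(x) for |x| > R. Then there exists R such that J·|∂Δ| > 2·Σ_{x∈Δ} ĥ(x) for ALL finite nonempty Δ ⊂ ℤ^d. -/
open Finset

lemma sign_abs_eq (a b : ℤ) (h1 : a.natAbs = b.natAbs) (h2 : decide (0 ≤ a) = decide (0 ≤ b)) : a = b := by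
  simp only [decide_eq_decide] at h2; omega

lemma shell_card {d : ℕ} (hd : 2 ≤ d) (Δ : Finset (Fin d → ℤ)) (k : ℕ) :
    ((Δ.filter (fun x => l1 x = k)).card : ℝ) ≤ 2 * (2*(k:ℝ)+1)^(d-1) := by
  classical
  have hd1 : d - 1 < d := by omega
  set j : Fin d := ⟨d-1, hd1⟩ with hj
  set S := (Fintype.piFinset (fun _ : Fin (d-1) => Finset.Icc (-(k:ℤ)) (k:ℤ))) ×ˢ
      (Finset.univ : Finset Bool) with hS
  have hcard : S.card = (2*k+1)^(d-1) * 2 := by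
    simp [hS, Finset.card_product, Fintype.card_piFinset, Int.card_Icc]
    congr 1
    · ring_nf
      omega
  have key : (Δ.filter (fun x => l1 x = k)).card ≤ S.card := by
    apply Finset.card_le_card_of_injOn
      (fun x => (fun i : Fin (d-1) => x (Fin.castLE (by omega) i), decide (0 ≤ x j)))
    · intro x hx
      simp only [mem_coe, mem_filter] at hx
      simp only [mem_coe, hS, Finset.mem_product, Fintype.mem_piFinset, Finset.mem_Icc, Finset.mem_univ,
        and_true]
      intro i
      have hle : (x (Fin.castLE (by omega) i)).natAbs ≤ l1 x :=
        Finset.single_le_sum (f := fun i => (x i).natAbs) (fun _ _ => Nat.zero_le _) (mem_univ _)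
      rw [hx.2] at hle
      omega
    · intro x hx y hy hxy
      simp only [coe_filter, Set.mem_setOf_eq] at hx hy
      simp only [Prod.mk.injEq] at hxy
      have hcoord : ∀ i : Fin d, i ≠ j → x i = y i := by
        intro i hi
        have hiv : (i : ℕ) < d - 1 := by
          have := i.isLt
          rcases Nat.lt_or_ge (i : ℕ) (d-1) with h | h
          · exact h
          · exfalso; apply hi; apply Fin.ext; simp [hj]; omega
        have := congrFun hxy.1 ⟨(i : ℕ), hiv⟩
        simpa using this
      have hjj : x j = y j := by
        apply sign_abs_eq _ _ _ hxy.2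
        have hx2 : l1 x = (x j).natAbs + ∑ a ∈ univ.erase j, (x a).natAbs :=
          (Finset.add_sum_erase _ _ (mem_univ j)).symm
        have hy2 : l1 y = (y j).natAbs + ∑ a ∈ univ.erase j, (y a).natAbs :=
          (Finset.add_sum_erase _ _ (mem_univ j)).symm
        have hsum : ∑ a ∈ univ.erase j, (x a).natAbs = ∑ a ∈ univ.erase j, (y a).natAbs := by
          apply Finset.sum_congr rfl
          intro a ha
          rw [hcoord a (Finset.ne_of_mem_erase ha)]
        rw [hx.2] at hx2
        rw [hy.2] at hy2
        omega
      funext i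
      by_cases hi : i = j
      · rw [hi]; exact hjj
      · exact hcoord i hi
  calc ((Δ.filter (fun x => l1 x = k)).card : ℝ) ≤ (S.card : ℝ) := by exact_mod_cast key
    _ = ((2*k+1)^(d-1) * 2 : ℕ) := by rw [hcard]
    _ ≤ 2 * (2*(k:ℝ)+1)^(d-1) := by
        push_cast
        rw [mul_comm]

lemma sum_inv_l1 {d : ℕ} (hd : 2 ≤ d) (Δ : Finset (Fin d → ℤ)) :
    ∑ x ∈ Δ, (1 : ℝ) / ((max (l1 x) 1 : ℕ) : ℝ) ≤
      5 * 3^(d-1) * (Δ.card : ℝ) ^ (((d:ℝ)-1)/d) := by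
  classical
  rcases Δ.eq_empty_or_nonempty with rfl | hne
  · simp
    positivity
  set n := Δ.card with hn
  have hn1 : 1 ≤ n := Finset.card_pos.mpr hne
  set m := Nat.findGreatest (fun m => m^d ≤ n) n with hm
  have hm1 : 1 ≤ m := Nat.le_findGreatest hn1 (by simpa using hn1)
  have hmd : m^d ≤ n := Nat.findGreatest_spec (P := fun m => m^d ≤ n) hn1 (by simpa using hn1)
  have hsucc : n < (m+1)^d := by
    by_cases h : m + 1 ≤ n
    · have := Nat.findGreatest_is_greatest (P := fun m => m^d ≤ n) (n := n) (k := m+1)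
        (by omega) h
      simpa using Nat.lt_of_not_le this
    · calc n < m + 1 := by omega
        _ ≤ (m+1)^d := Nat.le_self_pow (by omega) _
  -- real facts
  have hmR : (1:ℝ) ≤ m := by exact_mod_cast hm1
  -- m^(d-1) ≤ n^((d-1)/d)
  have hmn : ((m:ℝ))^(d-1) ≤ (n:ℝ) ^ (((d:ℝ)-1)/d) := by
    have h1 : (m:ℝ) ≤ (n:ℝ) ^ ((1:ℝ)/d) := by
      have h0 : ((m:ℝ))^(d:ℕ) ≤ (n:ℝ) := by exact_mod_cast hmd
      have := Real.rpow_le_rpow (by positivity) h0 (by positivity : (0:ℝ) ≤ 1/d)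
      rwa [← Real.rpow_natCast (m:ℝ) d, ← Real.rpow_mul (by positivity),
        mul_one_div, div_self (by positivity : (d:ℝ) ≠ 0), Real.rpow_one] at this
    calc ((m:ℝ))^(d-1) ≤ ((n:ℝ) ^ ((1:ℝ)/d))^(d-1) :=
          pow_le_pow_left₀ (by positivity) h1 _
      _ = (n:ℝ) ^ (((d:ℝ)-1)/d) := by
          rw [← Real.rpow_natCast ((n:ℝ) ^ ((1:ℝ)/d)) (d-1), ← Real.rpow_mul (by positivity)]
          congr 1
          have : ((d-1 : ℕ) : ℝ) = (d:ℝ) - 1 := by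
            push_cast [Nat.cast_sub (by omega : 1 ≤ d)]; ring
          rw [this]; ring
  -- split
  rw [← Finset.sum_filter_add_sum_filter_not Δ (fun x => l1 x ≤ m)]
  have part2 : ∑ x ∈ Δ.filter (fun x => ¬ l1 x ≤ m), (1 : ℝ) / ((max (l1 x) 1 : ℕ) : ℝ) ≤
      2^(d-1) * (m:ℝ)^(d-1) := by
    have hterm : ∀ x ∈ Δ.filter (fun x => ¬ l1 x ≤ m),
        (1 : ℝ) / ((max (l1 x) 1 : ℕ) : ℝ) ≤ 1 / ((m:ℝ)+1) := by
      intro x hx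
      simp only [mem_filter, not_le] at hx
      apply one_div_le_one_div_of_le (by positivity)
      have : m + 1 ≤ max (l1 x) 1 := by omega
      exact_mod_cast this
    calc ∑ x ∈ Δ.filter (fun x => ¬ l1 x ≤ m), (1 : ℝ) / ((max (l1 x) 1 : ℕ) : ℝ)
        ≤ (Δ.filter (fun x => ¬ l1 x ≤ m)).card • (1 / ((m:ℝ)+1)) :=
          Finset.sum_le_card_nsmul _ _ _ hterm
      _ = ((Δ.filter (fun x => ¬ l1 x ≤ m)).card : ℝ) / ((m:ℝ)+1) := by
          rw [nsmul_eq_mul]; ring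
      _ ≤ (n:ℝ) / ((m:ℝ)+1) := by
          apply div_le_div_of_nonneg_right ?_ (by positivity)
          · exact_mod_cast Finset.card_filter_le _ _
      _ ≤ ((m:ℝ)+1)^(d-1) := by
          rw [div_le_iff₀ (by positivity)]
          have : ((m:ℝ)+1)^(d-1) * ((m:ℝ)+1) = ((m:ℝ)+1)^d := by
            rw [← pow_succ]
            congr 1
            omega
          rw [this]
          have := hsucc.le
          exact_mod_cast this
      _ ≤ 2^(d-1) * (m:ℝ)^(d-1) := by
          rw [← mul_pow]
          apply pow_le_pow_left₀ (by positivity)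
          linarith
  have part1 : ∑ x ∈ Δ.filter (fun x => l1 x ≤ m), (1 : ℝ) / ((max (l1 x) 1 : ℕ) : ℝ) ≤
      4 * 3^(d-1) * (m:ℝ)^(d-1) := by
    have hfib : ∑ x ∈ Δ.filter (fun x => l1 x ≤ m), (1 : ℝ) / ((max (l1 x) 1 : ℕ) : ℝ)
        = ∑ k ∈ Finset.range (m+1), ∑ x ∈ (Δ.filter (fun x => l1 x ≤ m)).filter
            (fun x => l1 x = k), (1 : ℝ) / ((max (l1 x) 1 : ℕ) : ℝ) := by
      rw [Finset.sum_fiberwise_of_maps_to]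
      intro x hx
      simp only [mem_filter] at hx
      simp [Finset.mem_range]
      omega
    rw [hfib]
    have hbound : ∀ k ∈ Finset.range (m+1),
        ∑ x ∈ (Δ.filter (fun x => l1 x ≤ m)).filter (fun x => l1 x = k),
          (1 : ℝ) / ((max (l1 x) 1 : ℕ) : ℝ) ≤ 2 * 3^(d-1) * (m:ℝ)^(d-2) := by
      intro k hk
      have hkm : k ≤ m := by simpa [Nat.lt_succ_iff] using hk
      have hcard := shell_card hd (Δ.filter (fun x => l1 x ≤ m)) k
      have hsum : ∑ x ∈ (Δ.filter (fun x => l1 x ≤ m)).filter (fun x => l1 x = k),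
          (1 : ℝ) / ((max (l1 x) 1 : ℕ) : ℝ)
          = ((Δ.filter (fun x => l1 x ≤ m)).filter (fun x => l1 x = k)).card *
            ((1:ℝ) / ((max k 1 : ℕ):ℝ)) := by
        rw [Finset.sum_congr rfl (fun x hx => ?_), Finset.sum_const, nsmul_eq_mul]
        simp only [mem_filter] at hx
        rw [hx.2]
      rw [hsum]
      rcases Nat.eq_zero_or_pos k with rfl | hk1
      · calc ((Δ.filter (fun x => l1 x ≤ m)).filter (fun x => l1 x = 0)).card *
              ((1:ℝ) / ((max 0 1 : ℕ):ℝ)) ≤ 2 * (2*(0:ℝ)+1)^(d-1) * 1 := by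
              norm_num
              simpa using hcard
          _ ≤ 2 * 3^(d-1) * (m:ℝ)^(d-2) := by
              have h3 : ((2*(0:ℝ)+1))^(d-1) = 1 := by norm_num
              rw [h3]
              have : (1:ℝ) ≤ 3^(d-1) := one_le_pow₀ (by norm_num)
              have hm2 : (1:ℝ) ≤ (m:ℝ)^(d-2) := one_le_pow₀ hmR
              nlinarith
      · have hmax : (max k 1 : ℕ) = k := by omega
        rw [hmax]
        have hkR : (1:ℝ) ≤ (k:ℝ) := by exact_mod_cast hk1
        calc ((Δ.filter (fun x => l1 x ≤ m)).filter (fun x => l1 x = k)).card *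
              ((1:ℝ) / (k:ℝ)) ≤ (2 * (2*(k:ℝ)+1)^(d-1)) * ((1:ℝ) / (k:ℝ)) := by
              apply mul_le_mul_of_nonneg_right hcard (by positivity)
          _ ≤ (2 * (3*(k:ℝ))^(d-1)) * ((1:ℝ) / (k:ℝ)) := by
              apply mul_le_mul_of_nonneg_right ?_ (by positivity)
              apply mul_le_mul_of_nonneg_left ?_ (by norm_num)
              apply pow_le_pow_left₀ (by positivity)
              linarith
          _ = 2 * 3^(d-1) * ((k:ℝ)^(d-1) / (k:ℝ)) := by
              rw [mul_pow]; ring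
          _ = 2 * 3^(d-1) * (k:ℝ)^(d-2) := by
              congr 1
              rw [eq_comm, eq_div_iff (by positivity), ← pow_succ]
              congr 1
              omega
          _ ≤ 2 * 3^(d-1) * (m:ℝ)^(d-2) := by
              apply mul_le_mul_of_nonneg_left ?_ (by positivity)
              apply pow_le_pow_left₀ (by positivity)
              exact_mod_cast hkm
    calc ∑ k ∈ Finset.range (m+1), ∑ x ∈ (Δ.filter (fun x => l1 x ≤ m)).filter
            (fun x => l1 x = k), (1 : ℝ) / ((max (l1 x) 1 : ℕ) : ℝ)
        ≤ (m+1) • (2 * 3^(d-1) * (m:ℝ)^(d-2)) := by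
          have := Finset.sum_le_card_nsmul (Finset.range (m+1)) _ _ hbound
          simpa using this
      _ = ((m:ℝ)+1) * (2 * 3^(d-1) * (m:ℝ)^(d-2)) := by
          rw [nsmul_eq_mul]; push_cast; ring
      _ ≤ (2*(m:ℝ)) * (2 * 3^(d-1) * (m:ℝ)^(d-2)) := by
          apply mul_le_mul_of_nonneg_right (by linarith) (by positivity)
      _ = 4 * 3^(d-1) * ((m:ℝ) * (m:ℝ)^(d-2)) := by ring
      _ = 4 * 3^(d-1) * (m:ℝ)^(d-1) := by
          congr 1
          rw [← pow_succ']
          congr 1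
          omega
  have htot : 4 * 3^(d-1) * (m:ℝ)^(d-1) + 2^(d-1) * (m:ℝ)^(d-1) ≤
      5 * 3^(d-1) * (m:ℝ)^(d-1) := by
    have h23 : (2:ℝ)^(d-1) ≤ 3^(d-1) := pow_le_pow_left₀ (by norm_num) (by norm_num) _
    nlinarith [pow_nonneg (le_trans zero_le_one hmR) (d-1)]
  calc _ ≤ 4 * 3^(d-1) * (m:ℝ)^(d-1) + 2^(d-1) * (m:ℝ)^(d-1) := add_le_add part1 part2
    _ ≤ 5 * 3^(d-1) * (m:ℝ)^(d-1) := htot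
    _ ≤ 5 * 3^(d-1) * (n:ℝ) ^ (((d:ℝ)-1)/d) := by
        apply mul_le_mul_of_nonneg_left hmn (by positivity)

theorem statement7 (d : ℕ) (hd : 2 ≤ d) (hstar α J : ℝ)
    (hh : 0 < hstar) (hα : 1 < α) (hJ : 0 < J)
    (hiso : ∀ Δ : Finset (Fin d → ℤ),
      (Δ.card : ℝ) ^ (((d : ℝ) - 1) / d) ≤ (bdry Δ : ℝ) / (2 * d)) :
    ∃ R : ℕ, ∀ Δ : Finset (Fin d → ℤ), Δ.Nonempty →
      2 * ∑ x ∈ Δ, (if l1 x ≤ R then (0 : ℝ) else hfield d hstar α x)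
        < J * (bdry Δ : ℝ) := by
  classical
  set M : ℝ := 5 * 3^(d-1) * hstar / (d * J) with hM
  have hMpos : 0 < M := by
    apply div_pos (by positivity)
    positivity
  obtain ⟨R, hR⟩ := exists_nat_gt (M ^ ((1:ℝ)/(α-1)))
  refine ⟨R, fun Δ hne => ?_⟩
  set K : ℝ := hstar / ((R:ℝ)+1) ^ (α-1) with hK
  have hRpow : M < ((R:ℝ)+1) ^ (α-1) := by
    have h1 : M ^ ((1:ℝ)/(α-1)) < (R:ℝ)+1 := by
      have : (0:ℝ) ≤ M ^ ((1:ℝ)/(α-1)) := Real.rpow_nonneg hMpos.le _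
      linarith
    have h2 := Real.rpow_lt_rpow (Real.rpow_nonneg hMpos.le _) h1
      (by linarith : (0:ℝ) < α - 1)
    rwa [← Real.rpow_mul hMpos.le, one_div_mul_cancel (by linarith : α - 1 ≠ 0),
      Real.rpow_one] at h2
  have hKpos : 0 < K := div_pos hh (Real.rpow_pos_of_pos (by positivity) _)
  -- per-term bound
  have hterm : ∀ x ∈ Δ, (if l1 x ≤ R then (0 : ℝ) else hfield d hstar α x) ≤
      K * ((1:ℝ) / ((max (l1 x) 1 : ℕ) : ℝ)) := by
    intro x _
    by_cases hx : l1 x ≤ R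
    · simp only [hx, if_true]
      positivity
    · simp only [hx, if_false]
      push_neg at hx
      have hl1 : R + 1 ≤ l1 x := hx
      have hmax : (max (l1 x) 1 : ℕ) = l1 x := by omega
      rw [hfield, hmax]
      set L : ℝ := (l1 x : ℝ) with hL
      have hLR : (R:ℝ) + 1 ≤ L := by
        have := (Nat.cast_le (α := ℝ)).mpr hl1
        push_cast at this
        exact this
      have hLpos : (0:ℝ) < L := lt_of_lt_of_le (by positivity) hLR
      have hsplit : L ^ α = L ^ (α-1) * L := by
        have h := Real.rpow_add hLpos (α-1) 1
        rw [Real.rpow_one] at h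
        rw [← h]
        norm_num
      have hge : ((R:ℝ)+1) ^ (α-1) * L ≤ L ^ α := by
        rw [hsplit]
        apply mul_le_mul_of_nonneg_right ?_ hLpos.le
        exact Real.rpow_le_rpow (by positivity) hLR (by linarith)
      have hKL : K * (1 / L) = hstar / (((R:ℝ)+1) ^ (α-1) * L) := by
        rw [hK]
        field_simp
      rw [hKL]
      apply div_le_div_of_nonneg_left hh.le (by positivity) hge
  have hsum : ∑ x ∈ Δ, (if l1 x ≤ R then (0 : ℝ) else hfield d hstar α x) ≤
      K * (5 * 3^(d-1) * (Δ.card : ℝ) ^ (((d:ℝ)-1)/d)) := by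
    calc ∑ x ∈ Δ, (if l1 x ≤ R then (0 : ℝ) else hfield d hstar α x)
        ≤ ∑ x ∈ Δ, K * ((1:ℝ) / ((max (l1 x) 1 : ℕ) : ℝ)) := Finset.sum_le_sum hterm
      _ = K * ∑ x ∈ Δ, (1:ℝ) / ((max (l1 x) 1 : ℕ) : ℝ) := by rw [Finset.mul_sum]
      _ ≤ K * (5 * 3^(d-1) * (Δ.card : ℝ) ^ (((d:ℝ)-1)/d)) :=
          mul_le_mul_of_nonneg_left (sum_inv_l1 hd Δ) hKpos.le
  have hisoΔ := hiso Δ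
  have hdR : (2:ℝ) ≤ (d:ℝ) := by exact_mod_cast hd
  have hcard1 : (1:ℝ) ≤ (Δ.card : ℝ) ^ (((d:ℝ)-1)/d) := by
    apply Real.one_le_rpow ?_ (by apply div_nonneg <;> linarith)
    exact_mod_cast Finset.card_pos.mpr hne
  have hbpos : (0:ℝ) < (bdry Δ : ℝ) := by
    have h2d : (0:ℝ) < 2 * d := by positivity
    have h1 : (1:ℝ) ≤ (bdry Δ : ℝ) / (2*d) := le_trans hcard1 hisoΔ
    rw [le_div_iff₀ h2d] at h1
    linarith
  have hfinal : K * (5 * 3^(d-1) * (Δ.card : ℝ) ^ (((d:ℝ)-1)/d)) ≤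
      K * 5 * 3^(d-1) * ((bdry Δ : ℝ) / (2*d)) := by
    have := mul_le_mul_of_nonneg_left hisoΔ
      (by positivity : (0:ℝ) ≤ K * 5 * 3^(d-1))
    calc K * (5 * 3^(d-1) * (Δ.card : ℝ) ^ (((d:ℝ)-1)/d))
        = K * 5 * 3^(d-1) * (Δ.card : ℝ) ^ (((d:ℝ)-1)/d) := by ring
      _ ≤ K * 5 * 3^(d-1) * ((bdry Δ : ℝ) / (2*d)) := this
  -- coefficient comparison
  have hcoef : K * 5 * 3^(d-1) / d < J := by
    rw [hK]
    rw [div_lt_iff₀ (by positivity : (0:ℝ) < (d:ℝ))]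
    rw [div_mul_eq_mul_div, div_mul_eq_mul_div, div_lt_iff₀ (by positivity)]
    have : M * (d * J) = 5 * 3^(d-1) * hstar := by
      rw [hM]; field_simp
    have h2 := mul_lt_mul_of_pos_right hRpow (show (0:ℝ) < (d:ℝ)*J by positivity)
    rw [this] at h2
    nlinarith [h2]
  calc 2 * ∑ x ∈ Δ, (if l1 x ≤ R then (0 : ℝ) else hfield d hstar α x)
      ≤ 2 * (K * 5 * 3^(d-1) * ((bdry Δ : ℝ) / (2*d))) := by
        have := le_trans hsum hfinal
        linarith
    _ = (K * 5 * 3^(d-1) / d) * (bdry Δ : ℝ) := by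
        field_simp
    _ < J * (bdry Δ : ℝ) := by
        exact mul_lt_mul_of_pos_right hcoef hbpos
end

section
/- Let ν be a probability measure, μ a probability measure, φ : {-1,1}^{ℤ^d} → ℝ a bounded function depending only on finitely many coordinates (all contained in a finite cube Λ₀), and suppose dν = C · e^{βΦ} dμ where Φ(σ) = Σ_{x∈Λ₀} φ(x)σ(x) and C is the normalizing constant. If μ satisfies the DLR equations in every finite cube Λ ⊇ Λ₀ for the Hamiltonian Ĥ with field ĥ, then ν satisfies the DLR equations in every such Λ for the Hamiltonian H with field ĥ + φ. -/
open MeasureTheory Finset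

/-- Spin configurations on ℤ^d (spins are integers; only values ±1 are used). -/
abbrev Config (d : ℕ) := (Fin d → ℤ) → ℤ

/-- Replace the configuration `σ` inside `Λ` by the spin assignment `f` (spins ±1). -/
def patch {d : ℕ} (Λ : Finset (Fin d → ℤ))
    (f : ↥Λ → ({-1, 1} : Finset ℤ)) (σ : Config d) : Config d :=
  fun x => if hx : x ∈ Λ then (f ⟨x, hx⟩ : ℤ) else σ x

/-- Finite-volume Gibbs expectation of `g` in `Λ` with boundary condition `σ` outside `Λ`,
inverse temperature `β` and Hamiltonian `H` (evaluated on the full patched configuration). -/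
noncomputable def gibbsAvg {d : ℕ} (β : ℝ) (H : Config d → ℝ)
    (Λ : Finset (Fin d → ℤ)) (g : Config d → ℝ) (σ : Config d) : ℝ :=
  (∑ f : ↥Λ → ({-1, 1} : Finset ℤ),
      g (patch Λ f σ) * Real.exp (-β * H (patch Λ f σ))) /
  (∑ f : ↥Λ → ({-1, 1} : Finset ℤ), Real.exp (-β * H (patch Λ f σ)))

/-- The DLR equation for `μ` in the finite volume `Λ`, for Hamiltonian `H`:
the conditional distribution of the spins in `Λ` given the outside is the
finite-volume Gibbs measure. -/
def IsDLRAt {d : ℕ} (μ : Measure (Config d)) (β : ℝ) (H : Config d → ℝ)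
    (Λ : Finset (Fin d → ℤ)) : Prop :=
  ∀ g : Config d → ℝ, Measurable g → (∀ σ, |g σ| ≤ 1) →
    ∫ σ, g σ ∂μ = ∫ σ, gibbsAvg β H Λ g σ ∂μ

open scoped ENNReal NNReal

instance : Nonempty (({-1, 1} : Finset ℤ)) := ⟨⟨1, by decide⟩⟩

lemma patch_patch {d : ℕ} (Λ : Finset (Fin d → ℤ))
    (f f' : ↥Λ → ({-1, 1} : Finset ℤ)) (σ : Config d) :
    patch Λ f (patch Λ f' σ) = patch Λ f σ := by
  funext x
  by_cases hx : x ∈ Λ <;> simp [patch, hx]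

lemma patch_mem {d : ℕ} {Λ : Finset (Fin d → ℤ)}
    (f : ↥Λ → ({-1, 1} : Finset ℤ)) (σ : Config d) {x : Fin d → ℤ} (hx : x ∈ Λ) :
    patch Λ f σ x = (f ⟨x, hx⟩ : ℤ) := by
  simp [patch, hx]

lemma patch_spin {d : ℕ} {Λ : Finset (Fin d → ℤ)}
    (f : ↥Λ → ({-1, 1} : Finset ℤ)) (σ : Config d) {x : Fin d → ℤ} (hx : x ∈ Λ) :
    patch Λ f σ x = 1 ∨ patch Λ f σ x = -1 := by
  rw [patch_mem f σ hx]
  have := (f ⟨x, hx⟩).2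
  simp only [Finset.mem_insert, Finset.mem_singleton] at this
  tauto

lemma Zpos {d : ℕ} (β : ℝ) (H : Config d → ℝ) (Λ : Finset (Fin d → ℤ)) (σ : Config d) :
    0 < ∑ f : ↥Λ → ({-1, 1} : Finset ℤ), Real.exp (-β * H (patch Λ f σ)) :=
  Finset.sum_pos (fun _ _ => Real.exp_pos _) Finset.univ_nonempty

lemma abs_gibbsAvg_le {d : ℕ} {β : ℝ} {H : Config d → ℝ} {Λ : Finset (Fin d → ℤ)}
    {g : Config d → ℝ} {M : ℝ} (hg : ∀ σ, |g σ| ≤ M) (σ : Config d) :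
    |gibbsAvg β H Λ g σ| ≤ M := by
  have hZ := Zpos β H Λ σ
  rw [gibbsAvg, abs_div, abs_of_pos hZ, div_le_iff₀ hZ]
  calc |∑ f : ↥Λ → ({-1, 1} : Finset ℤ), g (patch Λ f σ) * Real.exp (-β * H (patch Λ f σ))|
      ≤ ∑ f : ↥Λ → ({-1, 1} : Finset ℤ), |g (patch Λ f σ) * Real.exp (-β * H (patch Λ f σ))| :=
        Finset.abs_sum_le_sum_abs _ _
    _ ≤ ∑ f : ↥Λ → ({-1, 1} : Finset ℤ), M * Real.exp (-β * H (patch Λ f σ)) := by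
        refine Finset.sum_le_sum fun f _ => ?_
        rw [abs_mul, Real.abs_exp]
        exact mul_le_mul_of_nonneg_right (hg _) (Real.exp_pos _).le
    _ = M * ∑ f : ↥Λ → ({-1, 1} : Finset ℤ), Real.exp (-β * H (patch Λ f σ)) := by
        rw [Finset.mul_sum]

lemma gibbsAvg_affine {d : ℕ} (β : ℝ) (H : Config d → ℝ) (Λ : Finset (Fin d → ℤ))
    (g : Config d → ℝ) (a b : ℝ) (σ : Config d) :
    gibbsAvg β H Λ (fun τ => a * g τ + b) σ = a * gibbsAvg β H Λ g σ + b := by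
  have hZ := (Zpos β H Λ σ).ne'
  rw [gibbsAvg, gibbsAvg]
  rw [show (∑ f : ↥Λ → ({-1, 1} : Finset ℤ),
      (a * g (patch Λ f σ) + b) * Real.exp (-β * H (patch Λ f σ)))
      = a * (∑ f : ↥Λ → ({-1, 1} : Finset ℤ),
          g (patch Λ f σ) * Real.exp (-β * H (patch Λ f σ)))
        + b * ∑ f : ↥Λ → ({-1, 1} : Finset ℤ), Real.exp (-β * H (patch Λ f σ)) by
    rw [Finset.mul_sum, Finset.mul_sum, ← Finset.sum_add_distrib]; exact Finset.sum_congr rfl fun f _ => by ring]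
  field_simp

lemma bound_nonneg {d : ℕ} {g : Config d → ℝ} {M : ℝ} (hg : ∀ σ, |g σ| ≤ M) : 0 ≤ M :=
  le_trans (abs_nonneg _) (hg (fun _ => 0))

lemma integrable_of_bound {d : ℕ} {μ : Measure (Config d)} [IsProbabilityMeasure μ]
    {g : Config d → ℝ} (hmg : AEStronglyMeasurable g μ) {M : ℝ} (hg : ∀ σ, |g σ| ≤ M) :
    Integrable g μ :=
  ⟨hmg, HasFiniteIntegral.of_bounded (C := M) (ae_of_all _ fun σ => by
    simpa [Real.norm_eq_abs] using hg σ)⟩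

lemma aesm_gibbsAvg {d : ℕ} {μ : Measure (Config d)} [IsProbabilityMeasure μ]
    {β : ℝ} {H : Config d → ℝ} {Λ : Finset (Fin d → ℤ)}
    (h : IsDLRAt μ β H Λ) {g : Config d → ℝ} (hmg : Measurable g)
    {M : ℝ} (hg : ∀ σ, |g σ| ≤ M) :
    AEStronglyMeasurable (gibbsAvg β H Λ g) μ := by
  have hM : 0 ≤ M := bound_nonneg hg
  set c : ℝ := M + 1 with hc
  have hcpos : 0 < c := by linarith
  set u : Config d → ℝ := fun σ => (1 / (2 * c)) * g σ + 1 / 2 with hu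
  have hmu : Measurable u := (hmg.const_mul _).add_const _
  have hub : ∀ σ, |u σ| ≤ 1 := by
    intro σ
    have habs : |1 / (2 * c) * g σ| ≤ 1 / 2 := by
      rw [abs_mul, abs_of_pos (by positivity : (0:ℝ) < 1 / (2 * c))]
      rw [div_mul_eq_mul_div, one_mul, div_le_div_iff₀ (by positivity) (by norm_num : (0:ℝ) < 2)]
      nlinarith [hg σ, abs_nonneg (g σ)]
    calc |u σ| = |1 / (2 * c) * g σ + 1 / 2| := by rw [hu]
      _ ≤ |1 / (2 * c) * g σ| + |(1:ℝ) / 2| := abs_add_le _ _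
      _ ≤ 1 := by rw [abs_of_nonneg (by norm_num : (0:ℝ) ≤ 1 / 2)]; linarith
  have hul : ∀ σ, 1 / (2 * c) ≤ u σ := by
    intro σ
    have h1 := (abs_le.1 (hg σ)).1
    have hgc : -M ≤ g σ := h1
    have h2c : (0:ℝ) < 2 * c := by positivity
    rw [hu]
    rw [div_le_iff₀ h2c, add_mul]
    have : 1 / (2 * c) * g σ * (2 * c) = g σ := by field_simp
    nlinarith
  have hui : Integrable u μ := integrable_of_bound hmu.aestronglyMeasurable hub
  have hipos : 0 < ∫ σ, u σ ∂μ := by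
    have hle : (1 / (2 * c)) ≤ ∫ σ, u σ ∂μ := by
      calc (1 / (2 * c)) = ∫ _σ, (1 / (2 * c)) ∂μ := by simp
        _ ≤ ∫ σ, u σ ∂μ := integral_mono (integrable_const _) hui (fun σ => hul σ)
    have : (0:ℝ) < 1 / (2 * c) := by positivity
    linarith
  have heq := h u hmu hub
  have hgi : Integrable (gibbsAvg β H Λ u) μ := by
    by_contra hni
    rw [integral_undef hni] at heq
    exact absurd heq hipos.ne'
  have hrepr : gibbsAvg β H Λ g = fun σ => (2 * c) * gibbsAvg β H Λ u σ - c := by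
    funext σ
    have h3 := gibbsAvg_affine β H Λ g (1 / (2 * c)) (1 / 2) σ
    rw [show (fun τ => 1 / (2 * c) * g τ + 1 / 2) = u from rfl] at h3
    rw [h3]
    field_simp
    ring
  rw [hrepr]
  exact (hgi.1.const_mul _).sub aestronglyMeasurable_const

lemma dlr_scaled {d : ℕ} {μ : Measure (Config d)} [IsProbabilityMeasure μ]
    {β : ℝ} {H : Config d → ℝ} {Λ : Finset (Fin d → ℤ)}
    (h : IsDLRAt μ β H Λ) {g : Config d → ℝ} (hmg : Measurable g)
    {M : ℝ} (hg : ∀ σ, |g σ| ≤ M) :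
    ∫ σ, g σ ∂μ = ∫ σ, gibbsAvg β H Λ g σ ∂μ := by
  have hM : 0 ≤ M := bound_nonneg hg
  set c : ℝ := M + 1 with hc
  have hcpos : 0 < c := by linarith
  set u : Config d → ℝ := fun σ => (1 / c) * g σ + 0 with hu
  have hmu : Measurable u := (hmg.const_mul _).add_const _
  have hub : ∀ σ, |u σ| ≤ 1 := by
    intro σ
    have h1 := abs_le.1 (hg σ)
    have hc1 : 1 / c * g σ * c = g σ := by field_simp
    rw [abs_le, hu]
    constructor
    · simp only [add_zero]
      rw [neg_le, ← neg_mul]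
      nlinarith
    · simp only [add_zero]
      nlinarith
  have heq := h u hmu hub
  have h2 : ∀ σ, gibbsAvg β H Λ u σ = (1 / c) * gibbsAvg β H Λ g σ + 0 := fun σ =>
    gibbsAvg_affine β H Λ g (1 / c) 0 σ
  rw [hu, funext h2] at heq
  simp only [add_zero] at heq
  rw [integral_const_mul, integral_const_mul] at heq
  have hcne : (1 : ℝ) / c ≠ 0 := by positivity
  exact mul_left_cancel₀ hcne heq


lemma dlr_indicator_zero {d : ℕ} {μ : Measure (Config d)} [IsProbabilityMeasure μ]
    {β : ℝ} {H : Config d → ℝ} {Λ : Finset (Fin d → ℤ)}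
    (h : IsDLRAt μ β H Λ) {A : Set (Config d)} (hA : MeasurableSet A) (hA0 : μ A = 0)
    (f₀ : ↥Λ → ({-1, 1} : Finset ℤ)) :
    ∀ᵐ σ ∂μ, patch Λ f₀ σ ∉ A := by
  set k : Config d → ℝ := A.indicator (fun _ => 1) with hk
  have hmk : Measurable k := (measurable_const.indicator hA)
  have hkb : ∀ σ, |k σ| ≤ 1 := by
    intro σ
    rw [hk]
    by_cases hσ : σ ∈ A <;> simp [Set.indicator_apply, hσ]
  have hknn : ∀ σ, 0 ≤ k σ := by
    intro σ
    rw [hk]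
    by_cases hσ : σ ∈ A <;> simp [Set.indicator_apply, hσ]
  have hik : ∫ σ, k σ ∂μ = 0 := by
    rw [hk]
    have : ∫ σ, A.indicator (fun _ => (1:ℝ)) σ ∂μ = (μ A).toReal :=
      MeasureTheory.integral_indicator_one hA
    rw [this, hA0]
    simp
  have heq := h k hmk hkb
  rw [hik] at heq
  have hnn : 0 ≤ gibbsAvg β H Λ k := by
    intro σ
    apply div_nonneg _ (Zpos β H Λ σ).le
    exact Finset.sum_nonneg fun f _ => mul_nonneg (hknn _) (Real.exp_pos _).le
  have hint : Integrable (gibbsAvg β H Λ k) μ :=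
    integrable_of_bound (aesm_gibbsAvg h hmk hkb) (fun σ => abs_gibbsAvg_le hkb σ)
  have hzero : gibbsAvg β H Λ k =ᵐ[μ] 0 :=
    (integral_eq_zero_iff_of_nonneg hnn hint).1 heq.symm
  filter_upwards [hzero] with σ hσ
  intro hmem
  have hZ := (Zpos β H Λ σ).ne'
  have hnum : (∑ f : ↥Λ → ({-1, 1} : Finset ℤ),
      k (patch Λ f σ) * Real.exp (-β * H (patch Λ f σ))) = 0 := by
    have := hσ
    rw [gibbsAvg] at this
    simp only [Pi.zero_apply] at this
    exact (div_eq_zero_iff.1 this).resolve_right hZ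
  have hterm := (Finset.sum_eq_zero_iff_of_nonneg
    (fun f _ => mul_nonneg (hknn _) (Real.exp_pos _).le)).1 hnum f₀ (Finset.mem_univ f₀)
  have : k (patch Λ f₀ σ) = 0 :=
    (mul_eq_zero.1 hterm).resolve_right (Real.exp_pos _).ne'
  rw [hk] at this
  rw [Set.indicator_of_mem hmem] at this
  exact one_ne_zero this

lemma measurable_coord {d : ℕ} (x : Fin d → ℤ) :
    Measurable (fun σ : Config d => (σ x : ℝ)) := by
  exact measurable_from_top.comp (measurable_pi_apply x)

lemma measurable_Phi {d : ℕ} (Λ₀ : Finset (Fin d → ℤ)) (φ : (Fin d → ℤ) → ℝ) :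
    Measurable (fun σ : Config d => ∑ x ∈ Λ₀, φ x * (σ x : ℝ)) := by
  apply Finset.measurable_sum
  intro x _
  exact (measurable_coord x).const_mul _

lemma ae_spins {d : ℕ} {μ : Measure (Config d)} [IsProbabilityMeasure μ]
    {β : ℝ} {H : Config d → ℝ} {Λ₀ Λ : Finset (Fin d → ℤ)} (hΛ : Λ₀ ⊆ Λ)
    (h : IsDLRAt μ β H Λ) :
    ∀ᵐ σ ∂μ, ∀ x ∈ Λ₀, σ x = 1 ∨ σ x = -1 := by
  set A : Set (Config d) := {σ | ¬ ∀ x ∈ Λ₀, σ x = 1 ∨ σ x = -1} with hA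
  have hmA : MeasurableSet A := by
    have : A = (⋂ x ∈ Λ₀, {σ : Config d | σ x = 1 ∨ σ x = -1})ᶜ := by
      rw [hA]
      ext σ
      simp only [Set.mem_compl_iff, Set.mem_iInter, Set.mem_setOf_eq, hA]
    rw [this]
    apply MeasurableSet.compl
    refine MeasurableSet.biInter (Set.to_countable _) fun x _ => ?_
    have hm : Measurable (fun σ : Config d => σ x) := measurable_pi_apply x
    have hs : MeasurableSet {n : ℤ | n = 1 ∨ n = -1} := MeasurableSpace.measurableSet_top
    exact hm hs
  set k : Config d → ℝ := A.indicator (fun _ => 1) with hk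
  have hmk : Measurable k := measurable_const.indicator hmA
  have hkb : ∀ σ, |k σ| ≤ 1 := by
    intro σ
    by_cases hσ : σ ∈ A <;> simp [hk, Set.indicator_apply, hσ]
  have hgz : ∀ σ, gibbsAvg β H Λ k σ = 0 := by
    intro σ
    rw [gibbsAvg]
    have : (∑ f : ↥Λ → ({-1, 1} : Finset ℤ),
        k (patch Λ f σ) * Real.exp (-β * H (patch Λ f σ))) = 0 := by
      apply Finset.sum_eq_zero
      intro f _
      have hnot : patch Λ f σ ∉ A := by
        rw [hA]
        simp only [Set.mem_setOf_eq, not_not]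
        intro x hx
        exact patch_spin f σ (hΛ hx)
      rw [hk, Set.indicator_of_notMem hnot, zero_mul]
    rw [this, zero_div]
  have heq := h k hmk hkb
  simp only [hgz, integral_zero] at heq
  have hik : ∫ σ, k σ ∂μ = (μ A).toReal := by
    rw [hk]
    exact MeasureTheory.integral_indicator_one hmA
  rw [hik] at heq
  have hA0 : μ A = 0 := by
    have := (ENNReal.toReal_eq_zero_iff _).1 heq
    rcases this with h0 | htop
    · exact h0
    · exact absurd htop (measure_ne_top μ A)
  rw [ae_iff]
  convert hA0 using 2

theorem statement18 (d : ℕ) (β : ℝ) (hβ : 0 < β)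
    (Λ₀ : Finset (Fin d → ℤ)) (φ : (Fin d → ℤ) → ℝ)
    (Hhat : Finset (Fin d → ℤ) → Config d → ℝ)
    (μ ν : Measure (Config d)) [IsProbabilityMeasure μ] [IsProbabilityMeasure ν]
    (C : ℝ) (hC : 0 < C)
    (hν : ν = μ.withDensity
      (fun σ => ENNReal.ofReal (C * Real.exp (β * ∑ x ∈ Λ₀, φ x * (σ x : ℝ)))))
    (hμ : ∀ Λ : Finset (Fin d → ℤ), Λ₀ ⊆ Λ → IsDLRAt μ β (Hhat Λ) Λ) :
    ∀ Λ : Finset (Fin d → ℤ), Λ₀ ⊆ Λ →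
      IsDLRAt ν β (fun σ => Hhat Λ σ - ∑ x ∈ Λ₀, φ x * (σ x : ℝ)) Λ := by
  intro Λ hΛ g hmg hgb
  have hdlr := hμ Λ hΛ
  set Φ : Config d → ℝ := fun σ => ∑ x ∈ Λ₀, φ x * (σ x : ℝ) with hΦdef
  set Hh : Config d → ℝ := Hhat Λ with hHh
  set H : Config d → ℝ := fun σ => Hh σ - Φ σ with hHdef
  set M₀ : ℝ := ∑ x ∈ Λ₀, |φ x| with hM₀
  set M : ℝ := C * Real.exp (β * M₀) with hM
  have hMpos : 0 < M := by positivity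
  set D' : Config d → ℝ := fun σ => min (C * Real.exp (β * Φ σ)) M with hD'def
  have hD'pos : ∀ σ, 0 < D' σ := fun σ => lt_min (by positivity) hMpos
  have hD'le : ∀ σ, D' σ ≤ M := fun σ => min_le_right _ _
  have hmΦ : Measurable Φ := measurable_Phi Λ₀ φ
  have hmD' : Measurable D' := (((hmΦ.const_mul β).exp).const_mul C).min measurable_const
  -- Φ at patched configurations
  have hΦpatch : ∀ (σ : Config d) (f : ↥Λ → ({-1, 1} : Finset ℤ)), Φ (patch Λ f σ) ≤ M₀ := by
    intro σ f
    rw [hΦdef, hM₀]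
    refine Finset.sum_le_sum fun x hx => ?_
    rcases patch_spin f σ (hΛ hx) with h1 | h1 <;> rw [h1] <;> push_cast <;>
      [simpa using le_abs_self (φ x); simpa using neg_le_abs (φ x)]
  have hD'patch : ∀ (σ : Config d) (f : ↥Λ → ({-1, 1} : Finset ℤ)),
      D' (patch Λ f σ) = C * Real.exp (β * Φ (patch Λ f σ)) := by
    intro σ f
    rw [hD'def]
    refine min_eq_left ?_
    rw [hM]
    exact mul_le_mul_of_nonneg_left
      (Real.exp_le_exp.2 (mul_le_mul_of_nonneg_left (hΦpatch σ f) hβ.le)) hC.le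
  -- rewrite ν with the truncated density
  have hν' : ν = μ.withDensity (fun σ => ENNReal.ofReal (D' σ)) := by
    rw [hν]
    refine MeasureTheory.withDensity_congr_ae ?_
    filter_upwards [ae_spins hΛ hdlr] with σ hσ
    have : Φ σ ≤ M₀ := by
      rw [hΦdef, hM₀]
      refine Finset.sum_le_sum fun x hx => ?_
      rcases hσ x hx with h1 | h1 <;> rw [h1] <;> push_cast <;>
        [simpa using le_abs_self (φ x); simpa using neg_le_abs (φ x)]
    have hmin : D' σ = C * Real.exp (β * Φ σ) := by
      rw [hD'def]
      exact min_eq_left (mul_le_mul_of_nonneg_left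
        (Real.exp_le_exp.2 (mul_le_mul_of_nonneg_left this hβ.le)) hC.le)
    rw [hmin]
  -- integral transfer to μ (for arbitrary integrand)
  have htrans : ∀ k : Config d → ℝ, ∫ σ, k σ ∂ν = ∫ σ, D' σ * k σ ∂μ := by
    intro k
    rw [hν']
    have hcoe : (fun σ => ENNReal.ofReal (D' σ))
        = fun σ => ((fun σ => (D' σ).toNNReal) σ : ℝ≥0∞) := rfl
    rw [hcoe, integral_withDensity_eq_integral_smul hmD'.real_toNNReal k]
    refine integral_congr_ae (ae_of_all _ fun σ => ?_)
    simp only [NNReal.smul_def, Real.coe_toNNReal _ (hD'pos σ).le, smul_eq_mul]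
  set G : Config d → ℝ := gibbsAvg β H Λ g with hGdef
  have hGpatch : ∀ (σ : Config d) (f : ↥Λ → ({-1, 1} : Finset ℤ)),
      G (patch Λ f σ) = G σ := by
    intro σ f
    rw [hGdef, gibbsAvg, gibbsAvg]
    simp only [patch_patch]
  have hGb : ∀ σ, |G σ| ≤ 1 := fun σ => abs_gibbsAvg_le hgb σ
  set R : Config d → ℝ := gibbsAvg β Hh Λ D' with hRdef
  have hRpos : ∀ σ, 0 < R σ := by
    intro σ
    rw [hRdef, gibbsAvg]
    refine div_pos (Finset.sum_pos (fun f _ => ?_) Finset.univ_nonempty) (Zpos β Hh Λ σ)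
    exact mul_pos (hD'pos _) (Real.exp_pos _)
  -- key pointwise identity
  have hkey : ∀ σ, gibbsAvg β Hh Λ (fun τ => D' τ * g τ) σ = G σ * R σ := by
    intro σ
    have hZ := Zpos β Hh Λ σ
    have hexpH : ∀ f : ↥Λ → ({-1, 1} : Finset ℤ),
        Real.exp (-β * H (patch Λ f σ))
          = Real.exp (β * Φ (patch Λ f σ)) * Real.exp (-β * Hh (patch Λ f σ)) := by
      intro f
      rw [← Real.exp_add]
      congr 1
      rw [hHdef]
      ring
    have hS₂ : (0:ℝ) < ∑ f : ↥Λ → ({-1, 1} : Finset ℤ),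
        Real.exp (β * Φ (patch Λ f σ)) * Real.exp (-β * Hh (patch Λ f σ)) :=
      Finset.sum_pos (fun f _ => mul_pos (Real.exp_pos _) (Real.exp_pos _))
        Finset.univ_nonempty
    have hA : gibbsAvg β Hh Λ (fun τ => D' τ * g τ) σ
        = (C * ∑ f : ↥Λ → ({-1, 1} : Finset ℤ), g (patch Λ f σ) *
            (Real.exp (β * Φ (patch Λ f σ)) * Real.exp (-β * Hh (patch Λ f σ)))) /
          (∑ f : ↥Λ → ({-1, 1} : Finset ℤ), Real.exp (-β * Hh (patch Λ f σ))) := by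
      rw [gibbsAvg, Finset.mul_sum]
      congr 1
      refine Finset.sum_congr rfl fun f _ => ?_
      simp only [hD'patch σ f]
      ring
    have hB : G σ
        = (∑ f : ↥Λ → ({-1, 1} : Finset ℤ), g (patch Λ f σ) *
            (Real.exp (β * Φ (patch Λ f σ)) * Real.exp (-β * Hh (patch Λ f σ)))) /
          (∑ f : ↥Λ → ({-1, 1} : Finset ℤ),
            Real.exp (β * Φ (patch Λ f σ)) * Real.exp (-β * Hh (patch Λ f σ))) := by
      rw [hGdef, gibbsAvg]
      congr 1
      · exact Finset.sum_congr rfl fun f _ => by rw [hexpH f]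
      · exact Finset.sum_congr rfl fun f _ => hexpH f
    have hCR : R σ
        = (C * ∑ f : ↥Λ → ({-1, 1} : Finset ℤ),
            Real.exp (β * Φ (patch Λ f σ)) * Real.exp (-β * Hh (patch Λ f σ))) /
          (∑ f : ↥Λ → ({-1, 1} : Finset ℤ), Real.exp (-β * Hh (patch Λ f σ))) := by
      rw [hRdef, gibbsAvg, Finset.mul_sum]
      congr 1
      refine Finset.sum_congr rfl fun f _ => ?_
      rw [hD'patch σ f]
      ring
    rw [hA, hB, hCR, div_mul_div_comm, div_eq_div_iff (by positivity) (by positivity)]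
    ring
  -- measurability of G
  have hmD'g : Measurable (fun τ => D' τ * g τ) := hmD'.mul hmg
  have hbD'g : ∀ τ, |D' τ * g τ| ≤ M := by
    intro τ
    rw [abs_mul, abs_of_pos (hD'pos τ)]
    calc D' τ * |g τ| ≤ M * 1 :=
      mul_le_mul (hD'le τ) (hgb τ) (abs_nonneg _) hMpos.le
    _ = M := mul_one M
  have hbD' : ∀ τ, |D' τ| ≤ M := fun τ => by
    rw [abs_of_pos (hD'pos τ)]; exact hD'le τ
  have hGaesm : AEStronglyMeasurable G μ := by
    have h1 : AEStronglyMeasurable (gibbsAvg β Hh Λ (fun τ => D' τ * g τ)) μ :=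
      aesm_gibbsAvg hdlr hmD'g hbD'g
    have h2 : AEStronglyMeasurable R μ := aesm_gibbsAvg hdlr hmD' hbD'
    have : G = fun σ => gibbsAvg β Hh Λ (fun τ => D' τ * g τ) σ / R σ := by
      funext σ
      rw [eq_div_iff (hRpos σ).ne']
      exact (hkey σ).symm
    rw [this]
    exact (h1.aemeasurable.div h2.aemeasurable).aestronglyMeasurable
  -- measurable clamped representative of G
  set G₀ : Config d → ℝ := fun σ => max (-1) (min (hGaesm.mk G σ) 1) with hG₀def
  have hmG₀ : Measurable G₀ :=
    measurable_const.max ((hGaesm.stronglyMeasurable_mk.measurable).min measurable_const)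
  have hG₀b : ∀ σ, |G₀ σ| ≤ 1 := by
    intro σ
    rw [abs_le]
    exact ⟨le_max_left _ _, max_le (by norm_num) (min_le_right _ _)⟩
  have hGG₀ : G =ᵐ[μ] G₀ := by
    filter_upwards [hGaesm.ae_eq_mk] with σ hσ
    have h1 := abs_le.1 (hGb σ)
    simp only [hG₀def, ← hσ]
    rw [min_eq_left h1.2, max_eq_right h1.1]
  -- null set where they differ, stable under patching
  obtain ⟨A, hNA, hmA, hA0⟩ :=
    MeasureTheory.exists_measurable_superset_of_null (μ := μ)
      (s := {σ | G σ ≠ G₀ σ}) (by rw [← MeasureTheory.ae_iff] at *; exact hGG₀)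
  have hall : ∀ᵐ σ ∂μ, ∀ f : ↥Λ → ({-1, 1} : Finset ℤ), patch Λ f σ ∉ A :=
    MeasureTheory.ae_all_iff.2 fun f => dlr_indicator_zero hdlr hmA hA0 f
  -- a.e. identity for the G₀ test function
  have hkey₀ : ∀ᵐ σ ∂μ, gibbsAvg β Hh Λ (fun τ => D' τ * G₀ τ) σ = G σ * R σ := by
    filter_upwards [hall] with σ hσ
    rw [gibbsAvg]
    have hnum : (∑ f : ↥Λ → ({-1, 1} : Finset ℤ),
        D' (patch Λ f σ) * G₀ (patch Λ f σ) * Real.exp (-β * Hh (patch Λ f σ)))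
        = G σ * ∑ f : ↥Λ → ({-1, 1} : Finset ℤ),
            D' (patch Λ f σ) * Real.exp (-β * Hh (patch Λ f σ)) := by
      rw [Finset.mul_sum]
      refine Finset.sum_congr rfl fun f _ => ?_
      have hne : G₀ (patch Λ f σ) = G (patch Λ f σ) := by
        by_contra hne
        exact hσ f (hNA (by simpa using (Ne.symm hne)))
      rw [hne, hGpatch σ f]
      ring
    rw [hnum, hRdef, gibbsAvg, mul_div_assoc]
  -- the chain of equalities
  have hL : ∫ σ, g σ ∂ν = ∫ σ, G σ * R σ ∂μ := by
    rw [htrans g, dlr_scaled hdlr hmD'g hbD'g]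
    exact integral_congr_ae (ae_of_all _ hkey)
  have hR : ∫ σ, G σ ∂ν = ∫ σ, G σ * R σ ∂μ := by
    rw [htrans G]
    have e1 : ∫ σ, D' σ * G σ ∂μ = ∫ σ, D' σ * G₀ σ ∂μ := by
      refine integral_congr_ae ?_
      filter_upwards [hGG₀] with σ hσ
      rw [hσ]
    have hbD'G₀ : ∀ τ, |D' τ * G₀ τ| ≤ M := by
      intro τ
      rw [abs_mul, abs_of_pos (hD'pos τ)]
      calc D' τ * |G₀ τ| ≤ M * 1 :=
        mul_le_mul (hD'le τ) (hG₀b τ) (abs_nonneg _) hMpos.le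
      _ = M := mul_one M
    rw [e1, dlr_scaled hdlr (g := fun τ => D' τ * G₀ τ) (hmD'.mul hmG₀) hbD'G₀]
    exact integral_congr_ae hkey₀
  rw [hL, ← hR]
end
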